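/- Let r≥3 and h∈ℕ. Define M_h as follows: take a copy of K_r with one vertex in each class V_j, replace each edge by h parallel edges to obtain a multigraph M, and let M_h be the graph obtained from M by K_r-expanding every (multi-)edge using pairwise vertex-disjoint expansion cliques. Then |M_h| = r + h·r·C(r,2) and M_h has degeneracy r−1. -/

import Mathlib

open Finset

lemma card_lt_pairs (n : ℕ) :
    #((univ : Finset (Fin n × Fin n)).filter fun p => p.1 < p.2) = n.choose 2 := by
  rw [Finset.card_eq_sum_card_fiberwise (f := Prod.fst) (t := univ) (fun p _ => mem_univ _)]
  have hfib : ∀ a : Fin n,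
      ((univ : Finset (Fin n × Fin n)).filter fun p => p.1 < p.2).filter
        (fun p => p.1 = a) = {a} ×ˢ Ioi a := by
    intro a; ext p
    simp only [mem_filter, mem_univ, true_and, mem_product, mem_singleton, mem_Ioi]
    constructor
    · rintro ⟨hlt, rfl⟩; exact ⟨rfl, hlt⟩
    · rintro ⟨rfl, hlt⟩; exact ⟨hlt, rfl⟩
  simp only [hfib, card_product, card_singleton, one_mul, Fin.card_Ioi]
  rw [Fin.sum_univ_eq_sum_range (fun i => n - 1 - i), Nat.choose_two_right,
    ← Finset.sum_range_id, ← Finset.sum_range_reflect]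
  exact Finset.sum_congr rfl fun i hi => by simp only [Finset.mem_range] at hi; omega


/-- Let `r ≥ 3`, `h ∈ ℕ` and let `M_h` be the graph obtained from the multigraph `M`
(a copy of `K_r` with one vertex `w j` in each class, each edge replaced by `h` parallel
edges) by `K_r`-expanding every multiedge using pairwise disjoint expansion cliques
`u p t : Fin r → β` (for each pair `p` with `p.1 < p.2` and each copy `t : Fin h`).
Then `|M_h| = r + h·r·C(r,2)` and `M_h` has degeneracy `r - 1`: there is an ordering of the
vertices in which every vertex has at most `r - 1` neighbours preceding it. -/
theorem stmt12 {β : Type*} [Fintype β] [DecidableEq β] {r h : ℕ} (hr : 3 ≤ r)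
    (V : Fin r → Set β)
    (w : Fin r → β) (u : Fin r × Fin r → Fin h → Fin r → β)
    (hwV : ∀ j, w j ∈ V j)
    (huV : ∀ p t j, p.1 < p.2 → u p t j ∈ V j)
    (hwinj : Function.Injective w)
    (huinj : ∀ p t j p' t' j', p.1 < p.2 → p'.1 < p'.2 →
      u p t j = u p' t' j' → p = p' ∧ t = t' ∧ j = j')
    (hwu : ∀ p t j, p.1 < p.2 → ∀ j', u p t j ≠ w j')
    (hcov : ∀ a : β, (∃ j, a = w j) ∨ ∃ p t j, p.1 < p.2 ∧ a = u p t j)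
    (G : SimpleGraph β) [DecidableRel G.Adj]
    (hG : ∀ a b : β, G.Adj a b ↔ ∃ p : Fin r × Fin r, p.1 < p.2 ∧ ∃ t : Fin h,
      ((∃ j j' : Fin r, j ≠ j' ∧ ¬((j = p.1 ∧ j' = p.2) ∨ (j = p.2 ∧ j' = p.1)) ∧
          a = u p t j ∧ b = u p t j') ∨
       (a = w p.1 ∧ b = u p t p.2) ∨ (b = w p.1 ∧ a = u p t p.2) ∨
       (a = w p.2 ∧ b = u p t p.1) ∨ (b = w p.2 ∧ a = u p t p.1))) :
    Fintype.card β = r + h * r * r.choose 2 ∧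
    ∃ L : List β, L.Nodup ∧ (∀ a : β, a ∈ L) ∧
      ∀ i : Fin L.length,
        ((L.take (i : ℕ)).filter fun b => G.Adj (L.get i) b).length ≤ r - 1 := by
  classical
  set P : Finset (Fin r × Fin r) := univ.filter (fun p => p.1 < p.2) with hPdef
  have hPmem : ∀ p : Fin r × Fin r, p ∈ P ↔ p.1 < p.2 := by
    intro p; simp [hPdef]
  set Q : Finset ((Fin r × Fin r) × Fin h × Fin r) :=
    P ×ˢ ((univ : Finset (Fin h)) ×ˢ (univ : Finset (Fin r))) with hQdef
  have hQmem : ∀ x : (Fin r × Fin r) × Fin h × Fin r, x ∈ Q ↔ x.1.1 < x.1.2 := by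
    intro x; simp [hQdef, hPmem]
  set Lw : List β := (List.finRange r).map w with hLwdef
  set Lu : List β := Q.toList.map (fun x => u x.1 x.2.1 x.2.2) with hLudef
  set L : List β := Lw ++ Lu with hLdef
  -- membership characterisations
  have hLwmem : ∀ a : β, a ∈ Lw ↔ ∃ j, a = w j := by
    intro a
    simp only [hLwdef, List.mem_map, List.mem_finRange, true_and]
    constructor
    · rintro ⟨j, rfl⟩; exact ⟨j, rfl⟩
    · rintro ⟨j, rfl⟩; exact ⟨j, rfl⟩
  have hLumem : ∀ a : β, a ∈ Lu ↔ ∃ p t j, p.1 < p.2 ∧ a = u p t j := by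
    intro a
    simp only [hLudef, List.mem_map, Finset.mem_toList, hQmem]
    constructor
    · rintro ⟨⟨p, t, j⟩, hp, rfl⟩; exact ⟨p, t, j, hp, rfl⟩
    · rintro ⟨p, t, j, hp, rfl⟩; exact ⟨⟨p, t, j⟩, hp, rfl⟩
  -- nodup
  have hLwnd : Lw.Nodup := (List.nodup_finRange r).map hwinj
  have hLund : Lu.Nodup := by
    refine List.Nodup.map_on ?_ Q.nodup_toList
    rintro ⟨p, t, j⟩ hx ⟨p', t', j'⟩ hy hxy
    rw [Finset.mem_toList, hQmem] at hx hy
    obtain ⟨h1, h2, h3⟩ := huinj p t j p' t' j' hx hy hxy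
    simp [h1, h2, h3]
  have hLnd : L.Nodup := by
    rw [hLdef, List.nodup_append]
    refine ⟨hLwnd, hLund, ?_⟩
    intro a haw b hau heq
    obtain ⟨j, rfl⟩ := (hLwmem a).1 haw
    obtain ⟨p, t, j', hp, he⟩ := (hLumem _).1 hau
    exact hwu p t j' hp j (he.symm.trans heq.symm)
  -- covers
  have hLmem : ∀ a : β, a ∈ L := by
    intro a
    rw [hLdef, List.mem_append]
    rcases hcov a with hc | ⟨p, t, j, hp, rfl⟩
    · exact Or.inl ((hLwmem a).2 hc)
    · exact Or.inr ((hLumem _).2 ⟨p, t, j, hp, rfl⟩)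
  -- length
  have hLwlen : Lw.length = r := by simp [hLwdef]
  have hLlen : L.length = r + r.choose 2 * (h * r) := by
    rw [hLdef, List.length_append, hLwlen, hLudef, List.length_map,
      Finset.length_toList, hQdef, Finset.card_product, Finset.card_product,
      card_univ, card_univ, Fintype.card_fin, Fintype.card_fin, hPdef, card_lt_pairs]
  have hcard : Fintype.card β = L.length := by
    rw [← Finset.card_univ, ← List.toFinset_card_of_nodup hLnd]
    congr 1
    exact (Finset.eq_univ_iff_forall.mpr fun a => List.mem_toFinset.mpr (hLmem a)).symm
  constructor
  · rw [hcard, hLlen]; ring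
  -- adjacency helpers
  have hww : ∀ j j' : Fin r, ¬ G.Adj (w j) (w j') := by
    intro j j' hadj
    rw [hG] at hadj
    obtain ⟨p, hp, t, hc⟩ := hadj
    rcases hc with ⟨j1, j2, _, _, ha, hb⟩ | ⟨ha, hb⟩ | ⟨hb, ha⟩ | ⟨ha, hb⟩ | ⟨hb, ha⟩
    · exact hwu p t j1 hp j ha.symm
    · exact hwu p t p.2 hp j' hb.symm
    · exact hwu p t p.2 hp j ha.symm
    · exact hwu p t p.1 hp j' hb.symm
    · exact hwu p t p.1 hp j ha.symm
  have hadj_u : ∀ p t j b, p.1 < p.2 → G.Adj (u p t j) b →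
      (∃ j', j' ≠ j ∧ ¬((j = p.1 ∧ j' = p.2) ∨ (j = p.2 ∧ j' = p.1)) ∧ b = u p t j') ∨
      (j = p.2 ∧ b = w p.1) ∨ (j = p.1 ∧ b = w p.2) := by
    intro p t j b hp hadj
    rw [hG] at hadj
    obtain ⟨p', hp', t', hc⟩ := hadj
    rcases hc with ⟨j1, j2, hne, hnp, ha, hb⟩ | ⟨ha, hb⟩ | ⟨hb, ha⟩ | ⟨ha, hb⟩ | ⟨hb, ha⟩
    · obtain ⟨h1, h2, h3⟩ := huinj p t j p' t' j1 hp hp' ha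
      subst h1; subst h2; subst h3
      exact Or.inl ⟨j2, hne.symm, hnp, hb⟩
    · exact absurd ha (hwu p t j hp p'.1)
    · obtain ⟨h1, h2, h3⟩ := huinj p t j p' t' p'.2 hp hp' ha
      subst h1; subst h2
      exact Or.inr (Or.inl ⟨h3, hb⟩)
    · exact absurd ha (hwu p t j hp p'.2)
    · obtain ⟨h1, h2, h3⟩ := huinj p t j p' t' p'.1 hp hp' ha
      subst h1; subst h2
      exact Or.inr (Or.inr ⟨h3, hb⟩)
  -- generic bound via a finset of potential neighbours
  have hfilter_le : ∀ (v : β) (N : Finset β), (∀ b, G.Adj v b → b ∈ N) →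
      ∀ i : ℕ, ((L.take i).filter fun b => G.Adj v b).length ≤ N.card := by
    intro v N hN i
    have h1 : ((L.take i).filter fun b => G.Adj v b).Sublist
        (L.filter fun b => G.Adj v b) := (List.take_sublist i L).filter _
    refine h1.length_le.trans ?_
    have h2 : (L.filter fun b => G.Adj v b).Nodup := hLnd.filter _
    rw [← List.toFinset_card_of_nodup h2]
    apply Finset.card_le_card
    intro b hb
    rw [List.mem_toFinset, List.mem_filter] at hb
    exact hN b (by simpa using hb.2)
  refine ⟨L, hLnd, hLmem, ?_⟩
  have hcases : ∀ (k : ℕ) (hk : k < L.length), k < r ∨ L.get ⟨k, hk⟩ ∈ Lu := by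
    intro k hk
    by_cases hkr : k < r
    · exact Or.inl hkr
    · right
      push_neg at hkr
      have hk2 : Lw.length ≤ k := by rwa [hLwlen]
      have hk3 : k - Lw.length < Lu.length := by
        have h9 := hk
        rw [hLdef, List.length_append] at h9
        omega
      have h5 : L.get ⟨k, hk⟩ = Lu[k - Lw.length]'hk3 :=
        List.getElem_append_right hk2
      rw [h5]
      exact List.getElem_mem _
  intro i
  obtain ⟨k, hki⟩ := i
  rcases hcov (L.get ⟨k, hki⟩) with ⟨j, hv⟩ | ⟨p, t, j, hp, hv⟩
  · -- v = w j : it sits among the first r positions, all earlier vertices are w's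
    have hkr : k < r := by
      rcases hcases k hki with hkr | hmem
      · exact hkr
      · obtain ⟨p, t, j', hp, he⟩ := (hLumem _).1 hmem
        rw [hv] at he
        exact absurd he.symm (hwu p t j' hp j)
    have htake : ∀ b ∈ L.take k, ∃ j', b = w j' := by
      intro b hb
      have hble : k ≤ Lw.length := by rw [hLwlen]; omega
      have h6 : L.take k = Lw.take k := List.take_append_of_le_length hble
      rw [h6] at hb
      exact (hLwmem b).1 (List.mem_of_mem_take hb)
    have hnil : ((L.take k).filter fun b => G.Adj (L.get ⟨k, hki⟩) b) = [] := by
      rw [List.filter_eq_nil_iff]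
      intro b hb
      obtain ⟨j', rfl⟩ := htake b hb
      rw [hv]
      simpa using hww j j'
    rw [hnil]
    simp
  · -- v = u p t j : bound by the degree, which is ≤ r - 1
    rw [hv]
    rcases eq_or_ne j p.1 with rfl | hj1
    · refine (hfilter_le _ (insert (w p.2) (((univ.erase p.1).erase p.2).image (u p t)))
        ?_ _).trans ?_
      · intro b hadj
        rcases hadj_u p t p.1 b hp hadj with ⟨j', hne, hnp, rfl⟩ | ⟨hj, rfl⟩ | ⟨_, rfl⟩
        · refine Finset.mem_insert_of_mem (Finset.mem_image.mpr ⟨j', ?_, rfl⟩)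
          push_neg at hnp
          exact Finset.mem_erase.mpr ⟨hnp.1 rfl, Finset.mem_erase.mpr ⟨hne, mem_univ _⟩⟩
        · exact absurd hj hp.ne
        · exact Finset.mem_insert_self _ _
      · refine (Finset.card_insert_le _ _).trans ?_
        have h1 : (((univ.erase p.1).erase p.2).image (u p t)).card ≤ r - 2 := by
          refine (Finset.card_image_le).trans ?_
          rw [Finset.card_erase_of_mem (Finset.mem_erase.mpr ⟨hp.ne', mem_univ _⟩),
            Finset.card_erase_of_mem (mem_univ _), card_univ, Fintype.card_fin]
          omega
        omega
    · rcases eq_or_ne j p.2 with rfl | hj2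
      · refine (hfilter_le _ (insert (w p.1) (((univ.erase p.2).erase p.1).image (u p t)))
          ?_ _).trans ?_
        · intro b hadj
          rcases hadj_u p t p.2 b hp hadj with ⟨j', hne, hnp, rfl⟩ | ⟨_, rfl⟩ | ⟨hj, rfl⟩
          · refine Finset.mem_insert_of_mem (Finset.mem_image.mpr ⟨j', ?_, rfl⟩)
            push_neg at hnp
            exact Finset.mem_erase.mpr ⟨hnp.2 rfl, Finset.mem_erase.mpr ⟨hne, mem_univ _⟩⟩
          · exact Finset.mem_insert_self _ _
          · exact absurd hj.symm hp.ne
        · refine (Finset.card_insert_le _ _).trans ?_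
          have h1 : (((univ.erase p.2).erase p.1).image (u p t)).card ≤ r - 2 := by
            refine (Finset.card_image_le).trans ?_
            rw [Finset.card_erase_of_mem (Finset.mem_erase.mpr ⟨hp.ne, mem_univ _⟩),
              Finset.card_erase_of_mem (mem_univ _), card_univ, Fintype.card_fin]
            omega
          omega
      · refine (hfilter_le _ ((univ.erase j).image (u p t)) ?_ _).trans ?_
        · intro b hadj
          rcases hadj_u p t j b hp hadj with ⟨j', hne, hnp, rfl⟩ | ⟨hj, rfl⟩ | ⟨hj, rfl⟩
          · exact Finset.mem_image.mpr ⟨j', Finset.mem_erase.mpr ⟨hne, mem_univ _⟩, rfl⟩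
          · exact absurd hj hj2
          · exact absurd hj hj1
        · refine (Finset.card_image_le).trans ?_
          rw [Finset.card_erase_of_mem (mem_univ _), card_univ, Fintype.card_fin]
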